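/- For m, n ≥ 3, the state complexity of (Vₘ(a,b,c,d))ᴿ · Vₙ(d,c,b,a) is exactly 3·2^{m+n−2}, where Vₖ(a,b,c,d) is the language of the k-state DFA with states {0,…,k−1}, initial state 0, final state k−1, where a acts as the cycle (0,…,k−1), b as the transposition (k−2, k−1), c sends k−1 to k−2 fixing other states, and d is the identity; and Vₙ(d,c,b,a) is the permutationally equivalent language with the roles of letters a,b,c,d reversed (d is the cycle, c the transposition, b the singular map, a the identity). -/

import Mathlib

namespace SCPaper

/-- Reversal of a language. -/
def rev {α : Type} (L : Language α) : Language α := {w | w.reverse ∈ L}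

/-- Union of two languages. -/
def lunion {α : Type} (K L : Language α) : Language α := {w | w ∈ K ∨ w ∈ L}

/-- Intersection of two languages. -/
def linter {α : Type} (K L : Language α) : Language α := {w | w ∈ K ∧ w ∈ L}

/-- Difference of two languages. -/
def ldiff {α : Type} (K L : Language α) : Language α := {w | w ∈ K ∧ w ∉ L}

/-- Symmetric difference of two languages. -/
def lsymm {α : Type} (K L : Language α) : Language α := lunion (ldiff K L) (ldiff L K)

/-- Sizes (numbers of states) of complete DFAs recognizing `L`. -/
def complexitySet {α : Type} (L : Language α) : Set ℕ :=
  {n | ∃ M : DFA α (Fin n), M.accepts = L}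

/-- A language is regular if it is recognized by some finite DFA. -/
def Regular {α : Type} (L : Language α) : Prop := (complexitySet L).Nonempty

/-- State complexity: the number of states of a minimal DFA for `L`. -/
noncomputable def sc {α : Type} (L : Language α) : ℕ := sInf (complexitySet L)

/-- The cyclic permutation (0,1,…,n−1). -/
def cyc (n : ℕ) (i : Fin n) : Fin n :=
  ⟨(i.val + 1) % n, Nat.mod_lt _ (Nat.lt_of_le_of_lt (Nat.zero_le _) i.isLt)⟩

/-- The transposition (0,1). -/
def tp01 (n : ℕ) (i : Fin n) : Fin n :=
  if i.val = 0 then ⟨1 % n, Nat.mod_lt _ (Nat.lt_of_le_of_lt (Nat.zero_le _) i.isLt)⟩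
  else if i.val = 1 then ⟨0, Nat.lt_of_le_of_lt (Nat.zero_le _) i.isLt⟩
  else i

/-- The singular map sending n−1 to 0 and fixing everything else. -/
def sing (n : ℕ) (i : Fin n) : Fin n :=
  if i.val = n - 1 then ⟨0, Nat.lt_of_le_of_lt (Nat.zero_le _) i.isLt⟩ else i

/-- The transposition (n−2, n−1). -/
def tpTop (n : ℕ) (i : Fin n) : Fin n :=
  if i.val = n - 1 then ⟨n - 2, by have := i.isLt; omega⟩
  else if i.val = n - 2 then ⟨n - 1, by have := i.isLt; omega⟩
  else i

/-- The singular map sending n−1 to n−2 and fixing everything else. -/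
def singTop (n : ℕ) (i : Fin n) : Fin n :=
  if i.val = n - 1 then ⟨n - 2, by have := i.isLt; omega⟩ else i

/-- 𝒰ₙ(a,b,∅): binary alphabet, a = cycle (0,…,n−1), b = transposition (0,1),
initial state 0, final state n−1. -/
def U2dfa (n : ℕ) (h : 0 < n) : DFA (Fin 2) (Fin n) where
  step := fun i x => if x = 0 then cyc n i else tp01 n i
  start := ⟨0, h⟩
  accept := {i | i.val = n - 1}

def U2 (n : ℕ) (h : 0 < n) : Language (Fin 2) := (U2dfa n h).accepts

/-- 𝒰ₙ(a,b,c): a = cycle, b = transposition (0,1), c = (n−1 ↦ 0). -/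
def Udfa (n : ℕ) (h : 0 < n) : DFA (Fin 3) (Fin n) where
  step := fun i x => if x = 0 then cyc n i else if x = 1 then tp01 n i else sing n i
  start := ⟨0, h⟩
  accept := {i | i.val = n - 1}

def U (n : ℕ) (h : 0 < n) : Language (Fin 3) := (Udfa n h).accepts

/-- 𝒰ₙ(a,b,c) with final state set {0}. -/
def U0dfa (n : ℕ) (h : 0 < n) : DFA (Fin 3) (Fin n) where
  step := fun i x => if x = 0 then cyc n i else if x = 1 then tp01 n i else sing n i
  start := ⟨0, h⟩
  accept := {i | i.val = 0}

def U0 (n : ℕ) (h : 0 < n) : Language (Fin 3) := (U0dfa n h).accepts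

/-- 𝒰ₙ(a,b,c,d): a = cycle, b = transposition (0,1), c = (n−1 ↦ 0), d = identity. -/
def U4dfa (n : ℕ) (h : 0 < n) : DFA (Fin 4) (Fin n) where
  step := fun i x =>
    if x = 0 then cyc n i else if x = 1 then tp01 n i else if x = 2 then sing n i else i
  start := ⟨0, h⟩
  accept := {i | i.val = n - 1}

def U4 (n : ℕ) (h : 0 < n) : Language (Fin 4) := (U4dfa n h).accepts

/-- 𝒰ₙ(d,c,b,a): d = cycle, c = transposition (0,1), b = (n−1 ↦ 0), a = identity. -/
def U4dcbaDfa (n : ℕ) (h : 0 < n) : DFA (Fin 4) (Fin n) where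
  step := fun i x =>
    if x = 3 then cyc n i else if x = 2 then tp01 n i else if x = 1 then sing n i else i
  start := ⟨0, h⟩
  accept := {i | i.val = n - 1}

def U4dcba (n : ℕ) (h : 0 < n) : Language (Fin 4) := (U4dcbaDfa n h).accepts

/-- 𝒱ₙ(a,b,c,d): a = cycle, b = transposition (n−2,n−1), c = (n−1 ↦ n−2), d = identity. -/
def Vdfa (n : ℕ) (h : 0 < n) : DFA (Fin 4) (Fin n) where
  step := fun i x =>
    if x = 0 then cyc n i else if x = 1 then tpTop n i else if x = 2 then singTop n i else i
  start := ⟨0, h⟩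
  accept := {i | i.val = n - 1}

def V (n : ℕ) (h : 0 < n) : Language (Fin 4) := (Vdfa n h).accepts

/-- 𝒱ₙ(d,c,b,a): d = cycle, c = transposition (n−2,n−1), b = (n−1 ↦ n−2), a = identity. -/
def VdcbaDfa (n : ℕ) (h : 0 < n) : DFA (Fin 4) (Fin n) where
  step := fun i x =>
    if x = 3 then cyc n i else if x = 2 then tpTop n i else if x = 1 then singTop n i else i
  start := ⟨0, h⟩
  accept := {i | i.val = n - 1}

def Vdcba (n : ℕ) (h : 0 < n) : Language (Fin 4) := (VdcbaDfa n h).accepts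

/-- Direct product of two DFAs with a chosen set of final states. -/
def prodDFA {α σ₁ σ₂ : Type} (M : DFA α σ₁) (N : DFA α σ₂) (acc : Set (σ₁ × σ₂)) :
    DFA α (σ₁ × σ₂) where
  step := fun p x => (M.step p.1 x, N.step p.2 x)
  start := (M.start, N.start)
  accept := acc


/-- Chinese-remainder style pairing k ↦ (k mod m, k mod n). -/
def toPair (m n : ℕ) (hm : 0 < m) (hn : 0 < n) (k : Fin (m * n)) : Fin m × Fin n :=
  (⟨k.val % m, Nat.mod_lt _ hm⟩, ⟨k.val % n, Nat.mod_lt _ hn⟩)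

/-- Componentwise successor on the product of two cyclic automata. -/
def prodSucc (m n : ℕ) (p : Fin m × Fin n) : Fin m × Fin n := (cyc m p.1, cyc n p.2)

/-- One-letter subset transition of the reversed NFA of 𝒰ₙ(a,b,c). -/
def rstep (n : ℕ) (h : 0 < n) (S : Set (Fin n)) (x : Fin 3) : Set (Fin n) :=
  {q | (Udfa n h).step q x ∈ S}

/-- Action of a word on subsets in the reversed NFA of 𝒰ₙ(a,b,c). -/
def rword (n : ℕ) (h : 0 < n) (S : Set (Fin n)) (w : List (Fin 3)) : Set (Fin n) :=
  w.foldl (rstep n h) S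

end SCPaper

open SCPaper

open SCPaper

namespace KRL
open Finset List SCPaper

/-! ### Basic objects -/

theorem pos3 {k : ℕ} (h : 3 ≤ k) : 0 < k := by omega

def zf (k : ℕ) (h : 3 ≤ k) : Fin k := ⟨0, by omega⟩
def tf (k : ℕ) (h : 3 ≤ k) : Fin k := ⟨k - 1, by omega⟩

abbrev PS (m n : ℕ) := Finset (Fin m) × Finset (Fin n)

/-- value-level transposition of `k-2, k-1` -/
def tpv (k v : ℕ) : ℕ := if v = k-1 then k-2 else if v = k-2 then k-1 else v
/-- value-level merge of `k-1` into `k-2` -/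
def sgv (k v : ℕ) : ℕ := if v = k-1 then k-2 else v

section Main

variable (m n : ℕ) (hm : 3 ≤ m) (hn : 3 ≤ n)

def Vstep (x : Fin 4) (q : Fin m) : Fin m :=
  (SCPaper.Vdfa m (pos3 hm)).step q x

def Nstep (x : Fin 4) (q : Fin n) : Fin n :=
  (SCPaper.VdcbaDfa n (pos3 hn)).step q x

def stepS (x : Fin 4) (S : Finset (Fin m)) : Finset (Fin m) :=
  univ.filter (fun q => Vstep m hm x q ∈ S)

def stepP (p : PS m n) (x : Fin 4) : PS m n :=
  (stepS m hm x p.1,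
    p.2.image (Nstep n hn x) ∪ (if zf m hm ∈ stepS m hm x p.1 then {zf n hn} else ∅))

def evalP (p : PS m n) (w : List (Fin 4)) : PS m n :=
  w.foldl (stepP m n hm hn) p

def startP : PS m n := ({tf m hm}, ∅)

def Inv (p : PS m n) : Prop := zf m hm ∈ p.1 → zf n hn ∈ p.2

instance : DecidablePred (Inv m n hm hn) := fun p => by unfold Inv; infer_instance

def Sig := {p : PS m n // Inv m n hm hn p}

instance : Fintype (Sig m n hm hn) := by unfold Sig; infer_instance

def D : DFA (Fin 4) (Sig m n hm hn) where
  step := fun s x => ⟨stepP m n hm hn s.val x, by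
    intro h0
    unfold stepP at h0 ⊢
    simp only [if_pos h0]
    exact Finset.mem_union_right _ (Finset.mem_singleton_self _)⟩
  start := ⟨startP m n hm, by
    intro h0
    exfalso
    have := Finset.mem_singleton.mp h0
    have : (zf m hm).val = (tf m hm).val := by rw [this]
    simp [zf, tf] at this
    omega⟩
  accept := {s | tf n hn ∈ s.val.2}

/-! ### step reduction lemmas -/

lemma Vstep_a (q : Fin m) : Vstep m hm 0 q = SCPaper.cyc m q := rfl
lemma Vstep_b (q : Fin m) : Vstep m hm 1 q = SCPaper.tpTop m q := rfl
lemma Vstep_c (q : Fin m) : Vstep m hm 2 q = SCPaper.singTop m q := rfl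
lemma Vstep_d (q : Fin m) : Vstep m hm 3 q = q := rfl

lemma Nstep_a (q : Fin n) : Nstep n hn 0 q = q := rfl
lemma Nstep_b (q : Fin n) : Nstep n hn 1 q = SCPaper.singTop n q := rfl
lemma Nstep_c (q : Fin n) : Nstep n hn 2 q = SCPaper.tpTop n q := rfl
lemma Nstep_d (q : Fin n) : Nstep n hn 3 q = SCPaper.cyc n q := rfl

lemma cyc_val (k : ℕ) (q : Fin k) : (SCPaper.cyc k q).val = (q.val + 1) % k := rfl
lemma tpTop_val (k : ℕ) (q : Fin k) : (SCPaper.tpTop k q).val = tpv k q.val := by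
  unfold SCPaper.tpTop tpv; split_ifs <;> rfl
lemma singTop_val (k : ℕ) (q : Fin k) : (SCPaper.singTop k q).val = sgv k q.val := by
  unfold SCPaper.singTop sgv; split_ifs <;> rfl

lemma mem_congr {k : ℕ} {S : Finset (Fin k)} {i j : Fin k} (h : i.val = j.val) :
    i ∈ S ↔ j ∈ S := by rw [show i = j from Fin.val_injective h]

lemma mem_stepS {x : Fin 4} {S : Finset (Fin m)} {q : Fin m} :
    q ∈ stepS m hm x S ↔ Vstep m hm x q ∈ S := by simp [stepS]

lemma mem_stepP_snd {p : PS m n} {x : Fin 4} {q : Fin n} :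
    q ∈ (stepP m n hm hn p x).2 ↔
      (∃ t ∈ p.2, Nstep n hn x t = q) ∨ (zf m hm ∈ stepS m hm x p.1 ∧ q = zf n hn) := by
  by_cases h : zf m hm ∈ stepS m hm x p.1 <;>
    simp [stepP, h, Finset.mem_union, Finset.mem_image] <;> exact or_comm

lemma evalP_nil (p : PS m n) : evalP m n hm hn p [] = p := rfl
lemma evalP_cons (p : PS m n) (x : Fin 4) (w : List (Fin 4)) :
    evalP m n hm hn p (x :: w) = evalP m n hm hn (stepP m n hm hn p x) w := rfl
lemma evalP_append (p : PS m n) (w z : List (Fin 4)) :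
    evalP m n hm hn p (w ++ z) = evalP m n hm hn (evalP m n hm hn p w) z :=
  List.foldl_append ..

/-! ### language correctness -/

lemma concat_split {α : Type} {w u v : List α} {x : α} :
    w ++ [x] = u ++ v ↔ (u = w ++ [x] ∧ v = []) ∨ ∃ v', v = v' ++ [x] ∧ w = u ++ v' := by
  constructor
  · intro h
    rcases List.eq_nil_or_concat v with rfl | ⟨v', y, rfl⟩
    · left; constructor
      · simpa using h.symm
      · rfl
    · right
      rw [List.concat_eq_append] at h
      have h2 : w ++ [x] = (u ++ v') ++ [y] := by rw [h, List.append_assoc]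
      have h3 := List.append_inj' h2 rfl
      obtain ⟨rfl, h4⟩ := h3
      have : x = y := by simpa using h4
      exact ⟨v', by rw [this, List.concat_eq_append], rfl⟩
  · rintro (⟨rfl, rfl⟩ | ⟨v', rfl, rfl⟩)
    · simp
    · simp

lemma charS (w : List (Fin 4)) (q : Fin m) :
    q ∈ (evalP m n hm hn (startP m n hm) w).1 ↔
      ((SCPaper.Vdfa m (pos3 hm)).evalFrom q w.reverse).val = m - 1 := by
  induction w using List.reverseRecOn generalizing q with
  | nil =>
    show q ∈ ({tf m hm} : Finset (Fin m)) ↔ q.val = m - 1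
    rw [Finset.mem_singleton]
    constructor
    · rintro rfl; rfl
    · intro h; exact Fin.val_injective h
  | append_singleton w x ih =>
    rw [evalP_append]
    rw [show evalP m n hm hn (evalP m n hm hn (startP m n hm) w) [x]
        = stepP m n hm hn (evalP m n hm hn (startP m n hm) w) x from rfl]
    rw [show ((w ++ [x]).reverse) = x :: w.reverse by simp]
    rw [show (SCPaper.Vdfa m (pos3 hm)).evalFrom q (x :: w.reverse) =
        (SCPaper.Vdfa m (pos3 hm)).evalFrom (Vstep m hm x q) w.reverse from rfl]
    exact (mem_stepS m hm).trans (ih (Vstep m hm x q))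

lemma V_nil_not : ([] : List (Fin 4)) ∉ SCPaper.V m (pos3 hm) := by
  intro h
  rw [SCPaper.V, DFA.mem_accepts] at h
  have : ((SCPaper.Vdfa m (pos3 hm)).eval []).val = m - 1 := h
  have h0 : ((SCPaper.Vdfa m (pos3 hm)).eval []).val = 0 := rfl
  omega

lemma charT (w : List (Fin 4)) (q : Fin n) :
    q ∈ (evalP m n hm hn (startP m n hm) w).2 ↔
      ∃ u v, w = u ++ v ∧ u.reverse ∈ SCPaper.V m (pos3 hm) ∧
        (SCPaper.VdcbaDfa n (pos3 hn)).eval v = q := by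
  induction w using List.reverseRecOn generalizing q with
  | nil =>
    constructor
    · intro h; exact absurd h (by simp [evalP, startP])
    · rintro ⟨u, v, huv, hu, hv⟩
      obtain ⟨rfl, rfl⟩ := List.append_eq_nil_iff.mp huv.symm
      exact absurd hu (V_nil_not m hm)
  | append_singleton w x ih =>
    rw [evalP_append]
    rw [show evalP m n hm hn (evalP m n hm hn (startP m n hm) w) [x]
        = stepP m n hm hn (evalP m n hm hn (startP m n hm) w) x from rfl]
    rw [mem_stepP_snd]
    have hS : zf m hm ∈ stepS m hm x (evalP m n hm hn (startP m n hm) w).1 ↔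
        (w ++ [x]).reverse ∈ SCPaper.V m (pos3 hm) := by
      have h1 : zf m hm ∈ stepS m hm x (evalP m n hm hn (startP m n hm) w).1 ↔
          zf m hm ∈ (evalP m n hm hn (startP m n hm) (w ++ [x])).1 := by
        rw [evalP_append]; rfl
      rw [h1, charS m n hm hn (w ++ [x]) (zf m hm)]
      rw [SCPaper.V, DFA.mem_accepts]
      rfl
    constructor
    · rintro (⟨t, ht, rfl⟩ | ⟨h1, rfl⟩)
      · obtain ⟨u, v, rfl, hu, hv⟩ := (ih t).mp ht
        refine ⟨u, v ++ [x], by rw [List.append_assoc], hu, ?_⟩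
        rw [DFA.eval_append_singleton, hv]; rfl
      · exact ⟨w ++ [x], [], by simp, hS.mp h1, rfl⟩
    · rintro ⟨u, v, huv, hu, hv⟩
      rcases (concat_split).mp huv with ⟨rfl, rfl⟩ | ⟨v', rfl, rfl⟩
      · right
        refine ⟨hS.mpr hu, ?_⟩
        exact hv.symm
      · left
        refine ⟨(SCPaper.VdcbaDfa n (pos3 hn)).eval v', (ih _).mpr ⟨u, v', rfl, hu, rfl⟩, ?_⟩
        rw [← hv, DFA.eval_append_singleton]; rfl

lemma memL (w : List (Fin 4)) :
    w ∈ SCPaper.rev (SCPaper.V m (pos3 hm)) * SCPaper.Vdcba n (pos3 hn) ↔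
      tf n hn ∈ (evalP m n hm hn (startP m n hm) w).2 := by
  rw [Language.mem_mul, charT m n hm hn w (tf n hn)]
  constructor
  · rintro ⟨a, ha, b, hb, rfl⟩
    refine ⟨a, b, rfl, ha, ?_⟩
    have : ((SCPaper.VdcbaDfa n (pos3 hn)).eval b).val = n - 1 := hb
    exact Fin.val_injective this
  · rintro ⟨u, v, rfl, hu, hv⟩
    refine ⟨u, hu, v, ?_, rfl⟩
    show ((SCPaper.VdcbaDfa n (pos3 hn)).eval v).val = n - 1
    rw [hv]; rfl

lemma evalD (p : PS m n) (h : Inv m n hm hn p) (w : List (Fin 4)) :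
    ((D m n hm hn).evalFrom ⟨p, h⟩ w).val = evalP m n hm hn p w := by
  induction w generalizing p h with
  | nil => rfl
  | cons x w ih => exact ih _ _

lemma acceptsD :
    (D m n hm hn).accepts = SCPaper.rev (SCPaper.V m (pos3 hm)) * SCPaper.Vdcba n (pos3 hn) := by
  ext w
  rw [DFA.mem_accepts]
  have h2 : ((D m n hm hn).eval w).val = evalP m n hm hn (startP m n hm) w :=
    evalD m n hm hn (startP m n hm) (D m n hm hn).start.2 w
  change tf n hn ∈ ((D m n hm hn).eval w).val.2 ↔ _
  rw [h2]
  exact (memL m n hm hn w).symm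

/-! ### cardinality -/

lemma half_card (k : ℕ) (hk : 3 ≤ k) :
    (univ.filter (fun S : Finset (Fin k) => zf k hk ∈ S)).card = 2 ^ (k - 1) ∧
    (univ.filter (fun S : Finset (Fin k) => zf k hk ∉ S)).card = 2 ^ (k - 1) := by
  have hbij : (univ.filter (fun S : Finset (Fin k) => zf k hk ∈ S)).card
      = (univ.filter (fun S : Finset (Fin k) => zf k hk ∉ S)).card := by
    apply Finset.card_bij' (fun S _ => S.erase (zf k hk)) (fun S _ => insert (zf k hk) S)
    · intro S hS
      exact Finset.insert_erase (Finset.mem_filter.mp hS).2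
    · intro S hS
      exact Finset.erase_insert (Finset.mem_filter.mp hS).2
    · intro S hS
      exact Finset.mem_filter.mpr ⟨Finset.mem_univ _, Finset.notMem_erase _ _⟩
    · intro S hS
      exact Finset.mem_filter.mpr ⟨Finset.mem_univ _, Finset.mem_insert_self _ _⟩
  have htot := Finset.card_filter_add_card_filter_not
    (s := (univ : Finset (Finset (Fin k)))) (p := fun S => zf k hk ∈ S)
  have hcard : (univ : Finset (Finset (Fin k))).card = 2 ^ k := by
    rw [Finset.card_univ, Fintype.card_finset, Fintype.card_fin]
  have h2 : 2 ^ k = 2 * 2 ^ (k - 1) := by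
    rw [← pow_succ']
    congr 1
    omega
  have htot' : (univ.filter (fun S : Finset (Fin k) => zf k hk ∈ S)).card
      + (univ.filter (fun S : Finset (Fin k) => zf k hk ∉ S)).card = 2 ^ k := by
    rw [← hcard, ← htot]
  constructor <;> omega

lemma card_Sig : Fintype.card (Sig m n hm hn) = 3 * 2 ^ (m + n - 2) := by
  classical
  have h1 : Fintype.card (Sig m n hm hn)
      = (univ.filter (Inv m n hm hn)).card := Fintype.card_subtype _
  have h2 : (univ.filter (fun p : PS m n => ¬ Inv m n hm hn p)).card
      = 2 ^ (m - 1) * 2 ^ (n - 1) := by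
    have he : (univ.filter (fun p : PS m n => ¬ Inv m n hm hn p))
        = (univ.filter (fun S : Finset (Fin m) => zf m hm ∈ S)) ×ˢ
          (univ.filter (fun T : Finset (Fin n) => ¬ zf n hn ∈ T)) := by
      rw [← Finset.filter_product, Finset.univ_product_univ]
      apply Finset.filter_congr
      intro p _
      unfold Inv
      constructor
      · intro h
        exact ⟨not_not.mp (fun hc => h (fun h1 => absurd h1 hc)), fun hc => h (fun _ => hc)⟩
      · rintro ⟨h1, h2⟩ h
        exact h2 (h h1)
    rw [he, Finset.card_product, (half_card m hm).1, (half_card n hn).2]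
  have htot := Finset.card_filter_add_card_filter_not
    (s := (univ : Finset (PS m n))) (p := Inv m n hm hn)
  have hcard : (univ : Finset (PS m n)).card = 2 ^ m * 2 ^ n := by
    rw [Finset.card_univ]
    rw [show Fintype.card (PS m n)
        = Fintype.card (Finset (Fin m)) * Fintype.card (Finset (Fin n)) from Fintype.card_prod _ _]
    rw [Fintype.card_finset, Fintype.card_finset, Fintype.card_fin, Fintype.card_fin]
  have hx1 : 2 ^ m = 2 * 2 ^ (m - 1) := by rw [← pow_succ']; congr 1; omega
  have hx2 : 2 ^ n = 2 * 2 ^ (n - 1) := by rw [← pow_succ']; congr 1; omega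
  have hx3 : 2 ^ (m + n - 2) = 2 ^ (m - 1) * 2 ^ (n - 1) := by
    rw [← pow_add]; congr 1; omega
  rw [h1, hx3]
  have hcard' : (univ : Finset (PS m n)).card
      = 4 * (2 ^ (m - 1) * 2 ^ (n - 1)) := by rw [hcard, hx1, hx2]; ring
  omega
/-! ### dynamics lemmas -/

lemma zf_mem_step_snd {p : PS m n} {x : Fin 4} (h : zf m hm ∈ stepS m hm x p.1) :
    zf n hn ∈ (stepP m n hm hn p x).2 := by
  unfold stepP
  rw [if_pos h]
  exact Finset.mem_union_right _ (Finset.mem_singleton_self _)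

lemma L_apow_S (p : PS m n) (k : ℕ) :
    (evalP m n hm hn p (List.replicate k 0)).1 =
      univ.filter (fun q => (⟨(q.val + k) % m, Nat.mod_lt _ (pos3 hm)⟩ : Fin m) ∈ p.1) := by
  induction k with
  | zero =>
    ext q
    simp only [List.replicate, evalP_nil, Finset.mem_filter, Finset.mem_univ, true_and]
    exact mem_congr (show q.val = (q.val + 0) % m by
      rw [Nat.add_zero, Nat.mod_eq_of_lt q.isLt])
  | succ k ih =>
    rw [show List.replicate (k+1) (0 : Fin 4) = List.replicate k 0 ++ [0] by
      rw [show [(0:Fin 4)] = List.replicate 1 0 from rfl, ← List.replicate_add]]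
    rw [evalP_append]
    rw [show evalP m n hm hn (evalP m n hm hn p (List.replicate k 0)) [0]
        = stepP m n hm hn (evalP m n hm hn p (List.replicate k 0)) 0 from rfl]
    ext q
    rw [show (stepP m n hm hn (evalP m n hm hn p (List.replicate k 0)) 0).1
        = stepS m hm 0 (evalP m n hm hn p (List.replicate k 0)).1 from rfl]
    rw [mem_stepS, Vstep_a, ih]
    simp only [Finset.mem_filter, Finset.mem_univ, true_and]
    refine (mem_congr ?_)
    show ((SCPaper.cyc m q).val + k) % m = (q.val + (k+1)) % m
    rw [cyc_val, Nat.mod_add_mod]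
    congr 1
    omega

lemma L_apow_T_sub (p : PS m n) (k : ℕ) :
    p.2 ⊆ (evalP m n hm hn p (List.replicate k 0)).2 ∧
    (evalP m n hm hn p (List.replicate k 0)).2 ⊆ p.2 ∪ {zf n hn} := by
  induction k with
  | zero => exact ⟨Finset.Subset.refl _, Finset.subset_union_left⟩
  | succ k ih =>
    rw [show List.replicate (k+1) (0 : Fin 4) = List.replicate k 0 ++ [0] by
      rw [show [(0:Fin 4)] = List.replicate 1 0 from rfl, ← List.replicate_add]]
    rw [evalP_append]
    rw [show evalP m n hm hn (evalP m n hm hn p (List.replicate k 0)) [0]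
        = stepP m n hm hn (evalP m n hm hn p (List.replicate k 0)) 0 from rfl]
    have himg : ((evalP m n hm hn p (List.replicate k 0)).2).image (Nstep n hn 0)
        = (evalP m n hm hn p (List.replicate k 0)).2 := by
      rw [show Nstep n hn 0 = id from rfl, Finset.image_id]
    constructor
    · intro q hq
      unfold stepP
      exact Finset.mem_union_left _ (by rw [himg]; exact ih.1 hq)
    · intro q hq
      unfold stepP at hq
      rcases Finset.mem_union.mp hq with h | h
      · rw [himg] at h
        exact ih.2 h
      · refine Finset.mem_union_right _ ?_
        split at h
        · exact h
        · exact absurd h (Finset.notMem_empty _)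

lemma R_inj (p : PS m n) (hne : p.1.Nonempty) :
    evalP m n hm hn p (List.replicate m 0) = (p.1, p.2 ∪ {zf n hn}) := by
  obtain ⟨s, hs⟩ := hne
  have hfst : (evalP m n hm hn p (List.replicate m 0)).1 = p.1 := by
    rw [L_apow_S]
    ext q
    simp only [Finset.mem_filter, Finset.mem_univ, true_and]
    exact (mem_congr (show (q.val + m) % m = q.val by
      rw [Nat.add_mod_right, Nat.mod_eq_of_lt q.isLt]))
  set j := if s.val = 0 then m else s.val with hj
  have hj1 : 1 ≤ j ∧ j ≤ m := by
    have := s.isLt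
    rw [hj]; split <;> omega
  have hzf : zf n hn ∈ (evalP m n hm hn p (List.replicate j 0)).2 := by
    have hsplit2 : (List.replicate j (0:Fin 4)) = List.replicate (j-1) 0 ++ [0] := by
      rw [show [(0:Fin 4)] = List.replicate 1 0 from rfl, ← List.replicate_add]
      congr 1; omega
    have hc : zf m hm ∈ stepS m hm 0 (evalP m n hm hn p (List.replicate (j-1) 0)).1 := by
      have h2 : zf m hm ∈ (evalP m n hm hn p (List.replicate j 0)).1 := by
        rw [L_apow_S]
        simp only [Finset.mem_filter, Finset.mem_univ, true_and]
        have hv : ((zf m hm).val + j) % m = s.val := by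
          show (0 + j) % m = s.val
          have := s.isLt
          rw [hj]
          split
          · rw [Nat.zero_add, Nat.mod_self]; omega
          · rw [Nat.zero_add, Nat.mod_eq_of_lt (by omega)]
        rw [mem_congr hv]
        exact hs
      rw [hsplit2, evalP_append] at h2
      exact h2
    rw [hsplit2, evalP_append]
    exact zf_mem_step_snd m n hm hn hc
  have hsplit : (List.replicate m (0 : Fin 4)) = List.replicate j 0 ++ List.replicate (m - j) 0 := by
    rw [← List.replicate_add]; congr 1; omega
  have hsnd : (evalP m n hm hn p (List.replicate m 0)).2 = p.2 ∪ {zf n hn} := by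
    apply Finset.Subset.antisymm
    · exact (L_apow_T_sub m n hm hn p m).2
    · apply Finset.union_subset
      · exact (L_apow_T_sub m n hm hn p m).1
      · rw [Finset.singleton_subset_iff, hsplit, evalP_append]
        exact (L_apow_T_sub m n hm hn _ (m - j)).1 hzf
  exact Prod.ext hfst hsnd

lemma L_dpow (p : PS m n) (k : ℕ) (hk : k ≤ n) :
    (evalP m n hm hn p (List.replicate k 3)).1 = p.1 ∧
    ∀ q : Fin n, q ∈ (evalP m n hm hn p (List.replicate k 3)).2 ↔
      ((∃ t ∈ p.2, (t.val + k) % n = q.val) ∨ (zf m hm ∈ p.1 ∧ q.val < k)) := by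
  induction k with
  | zero =>
    refine ⟨rfl, fun q => ?_⟩
    constructor
    · intro h
      exact Or.inl ⟨q, h, by rw [Nat.add_zero, Nat.mod_eq_of_lt q.isLt]⟩
    · rintro (⟨t, ht, hv⟩ | ⟨_, h⟩)
      · have hv' : t.val = q.val := by
          rw [Nat.add_zero, Nat.mod_eq_of_lt t.isLt] at hv
          exact hv
        show q ∈ p.2
        exact (mem_congr hv').mp ht
      · omega
  | succ k ih =>
    have ih := ih (by omega)
    rw [show List.replicate (k+1) (3 : Fin 4) = List.replicate k 3 ++ [3] by
      rw [show [(3:Fin 4)] = List.replicate 1 3 from rfl, ← List.replicate_add]]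
    rw [evalP_append]
    rw [show evalP m n hm hn (evalP m n hm hn p (List.replicate k 3)) [3]
        = stepP m n hm hn (evalP m n hm hn p (List.replicate k 3)) 3 from rfl]
    have hfix : stepS m hm 3 (evalP m n hm hn p (List.replicate k 3)).1
        = p.1 := by
      rw [← ih.1]
      ext q
      rw [mem_stepS, Vstep_d]
    constructor
    · exact hfix
    · intro q
      rw [show (stepP m n hm hn (evalP m n hm hn p (List.replicate k 3)) 3).2
          = ((evalP m n hm hn p (List.replicate k 3)).2).image (Nstep n hn 3) ∪
            (if zf m hm ∈ stepS m hm 3 (evalP m n hm hn p (List.replicate k 3)).1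
             then {zf n hn} else ∅) from rfl]
      rw [hfix, Finset.mem_union]
      constructor
      · rintro (h | h)
        · obtain ⟨r, hr, hrq⟩ := Finset.mem_image.mp h
          rcases (ih.2 r).mp hr with ⟨t, ht, htr⟩ | ⟨h0, hrk⟩
          · left
            refine ⟨t, ht, ?_⟩
            rw [← hrq, Nstep_d, cyc_val, ← htr, Nat.mod_add_mod, Nat.add_assoc]
          · right
            refine ⟨h0, ?_⟩
            rw [← hrq, Nstep_d, cyc_val]
            have hrn : r.val + 1 < n := by omega
            rw [Nat.mod_eq_of_lt hrn]
            omega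
        · split at h
          · rename_i h0
            right
            have : q = zf n hn := Finset.mem_singleton.mp h
            rw [this]
            exact ⟨h0, show (0:ℕ) < k + 1 by omega⟩
          · exact absurd h (Finset.notMem_empty _)
      · rintro (⟨t, ht, htq⟩ | ⟨h0, hqk⟩)
        · left
          apply Finset.mem_image.mpr
          refine ⟨⟨(t.val + k) % n, Nat.mod_lt _ (by omega)⟩, ?_, ?_⟩
          · rw [ih.2]
            exact Or.inl ⟨t, ht, rfl⟩
          · apply Fin.val_injective
            rw [Nstep_d, cyc_val]
            show ((t.val + k) % n + 1) % n = q.val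
            rw [Nat.mod_add_mod, Nat.add_assoc]
            exact htq
        · by_cases hq0 : q.val = 0
          · right
            rw [if_pos h0]
            exact Finset.mem_singleton.mpr (Fin.val_injective hq0)
          · left
            apply Finset.mem_image.mpr
            refine ⟨⟨q.val - 1, by omega⟩, ?_, ?_⟩
            · rw [ih.2]
              exact Or.inr ⟨h0, show q.val - 1 < k by omega⟩
            · apply Fin.val_injective
              rw [Nstep_d, cyc_val]
              show (q.val - 1 + 1) % n = q.val
              rw [Nat.mod_eq_of_lt (by omega)]
              omega

/-! ### reachability -/

def sup (hm : 3 ≤ m) (q : Fin m) : Fin m := ⟨(q.val + 1) % m, Nat.mod_lt _ (pos3 hm)⟩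

lemma sup_val {q : Fin m} (h : q.val + 1 < m) : (sup m hm q).val = q.val + 1 :=
  Nat.mod_eq_of_lt h

lemma mem_sup_image {A : Finset (Fin m)} (hA : ∀ r ∈ A, r.val + 1 < m) (q : Fin m) :
    q ∈ A.image (sup m hm) ↔ ∃ r ∈ A, r.val + 1 = q.val := by
  rw [Finset.mem_image]
  constructor
  · rintro ⟨r, hr, rfl⟩
    exact ⟨r, hr, (sup_val m hm (hA r hr)).symm⟩
  · rintro ⟨r, hr, hv⟩
    refine ⟨r, hr, Fin.val_injective ?_⟩
    rw [sup_val m hm (hA r hr)]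
    exact hv

lemma mem_insert_tf_iff (X : Finset (Fin m)) (q : Fin m) :
    q ∈ insert (tf m hm) X ↔ q.val = m - 1 ∨ q ∈ X := by
  rw [Finset.mem_insert, Fin.ext_iff]
  rfl

lemma evalP_pair (p : PS m n) (x y : Fin 4) :
    evalP m n hm hn p [x, y] = stepP m n hm hn (stepP m n hm hn p x) y := rfl

lemma snd_step_emptyT {A : Finset (Fin m)} {x : Fin 4} (h : zf m hm ∉ stepS m hm x A) :
    (stepP m n hm hn (A, ∅) x).2 = ∅ := by
  unfold stepP
  rw [if_neg h]
  simp

lemma base_stream : evalP m n hm hn (startP m n hm) [] = (insert (tf m hm) ∅, ∅) := by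
  rw [evalP_nil]
  unfold startP
  rw [show (insert (tf m hm) ∅ : Finset (Fin m)) = {tf m hm} by simp]

lemma R_stream (N : ℕ) : ∀ (E : Finset (Fin m)), (∑ q ∈ E, (m - 1 - q.val)) ≤ N →
    (∀ q ∈ E, 1 ≤ q.val ∧ q.val ≤ m - 2) →
    ∃ w, evalP m n hm hn (startP m n hm) w = (insert (tf m hm) E, ∅) := by
  induction N with
  | zero =>
    intro E hμ hb
    have hE : E = ∅ := by
      rcases Finset.eq_empty_or_nonempty E with h | ⟨q, hq⟩
      · exact h
      · exfalso
        have h1 := hb q hq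
        have h3 : (m - 1 - q.val) ≤ ∑ r ∈ E, (m - 1 - r.val) :=
          Finset.single_le_sum (f := fun r : Fin m => m - 1 - r.val)
            (fun r _ => Nat.zero_le _) hq
        omega
    subst hE
    exact ⟨[], base_stream m n hm hn⟩
  | succ N ih =>
    intro E hμ hb
    rcases Finset.eq_empty_or_nonempty E with rfl | hne
    · exact ⟨[], base_stream m n hm hn⟩
    by_cases hc : (⟨m - 2, by omega⟩ : Fin m) ∈ E
    -- case: m-2 ∈ E : use [0,2] (i.e. a then c)
    · set A := E.erase ⟨m - 2, by omega⟩ with hA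
      have hAb : ∀ r ∈ A, 1 ≤ r.val ∧ r.val ≤ m - 3 := by
        intro r hr
        have h1 := hb r (Finset.mem_of_mem_erase hr)
        have h2 : r ≠ ⟨m - 2, by omega⟩ := Finset.ne_of_mem_erase hr
        have h3 : r.val ≠ m - 2 := fun h => h2 (Fin.val_injective h)
        omega
      have hAlt : ∀ r ∈ A, r.val + 1 < m := by
        intro r hr
        have := hAb r hr
        omega
      set F := A.image (sup m hm) with hF
      have hFb : ∀ q ∈ F, 1 ≤ q.val ∧ q.val ≤ m - 2 := by
        intro q hq
        obtain ⟨r, hr, hv⟩ := (mem_sup_image m hm hAlt q).mp hq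
        have := hAb r hr
        omega
      have hFb2 : ∀ q ∈ F, 2 ≤ q.val := by
        intro q hq
        obtain ⟨r, hr, hv⟩ := (mem_sup_image m hm hAlt q).mp hq
        have := hAb r hr
        omega
      have hμF : ∑ q ∈ F, (m - 1 - q.val) ≤ N := by
        have hinj : ∀ x ∈ A, ∀ y ∈ A, sup m hm x = sup m hm y → x = y := by
          intro x hx y hy he
          apply Fin.val_injective
          have e1 := sup_val m hm (hAlt x hx)
          have e2 := sup_val m hm (hAlt y hy)
          have e3 : (sup m hm x).val = (sup m hm y).val := by rw [he]
          omega
        rw [hF, Finset.sum_image hinj]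
        have hterm : ∀ r ∈ A, m - 1 - (sup m hm r).val ≤ m - 1 - r.val - 1 := by
          intro r hr
          rw [sup_val m hm (hAlt r hr)]
          have := hAb r hr
          omega
        have h4 : ∑ r ∈ A, (m - 1 - (sup m hm r).val) ≤ ∑ r ∈ A, (m - 1 - r.val - 1) :=
          Finset.sum_le_sum hterm
        have h5 : ∑ r ∈ A, (m - 1 - r.val - 1) ≤ ∑ r ∈ A, (m - 1 - r.val) :=
          Finset.sum_le_sum (fun r _ => by omega)
        have h6 : (∑ r ∈ A, (m - 1 - r.val)) + (m - 1 - (⟨m - 2, by omega⟩ : Fin m).val)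
            = ∑ r ∈ E, (m - 1 - r.val) := Finset.sum_erase_add E _ hc
        have h7 : (m - 1 - (⟨m - 2, by omega⟩ : Fin m).val) = 1 := by
          show m - 1 - (m - 2) = 1
          omega
        -- also need strictness: every term of A decreased, but A could equal... use h6,h7
        omega
      obtain ⟨w', hw'⟩ := ih F hμF hFb
      refine ⟨w' ++ [0, 2], ?_⟩
      rw [evalP_append, hw', evalP_pair]
      have hfst : (stepP m n hm hn (stepP m n hm hn (insert (tf m hm) F, ∅) 0) 2).1
          = insert (tf m hm) E := by
        ext q
        rw [show (stepP m n hm hn (stepP m n hm hn (insert (tf m hm) F, ∅) 0) 2).1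
            = stepS m hm 2 (stepS m hm 0 (insert (tf m hm) F)) from rfl]
        rw [mem_stepS, Vstep_c, mem_stepS, Vstep_a]
        rw [mem_insert_tf_iff, mem_insert_tf_iff]
        rw [mem_sup_image m hm hAlt]
        have hval : (SCPaper.cyc m (SCPaper.singTop m q)).val = (sgv m q.val + 1) % m := by
          rw [cyc_val, singTop_val]
        rw [hval]
        have hq := q.isLt
        by_cases h1 : q.val = m - 1
        · -- both sides: left disjunct true
          have : sgv m q.val = m - 2 := by unfold sgv; rw [if_pos h1]
          rw [this]
          have : (m - 2 + 1) % m = m - 1 := by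
            rw [Nat.mod_eq_of_lt (by omega)]
            omega
          rw [this]
          simp [h1]
        · have hsg : sgv m q.val = q.val := by unfold sgv; rw [if_neg h1]
          rw [hsg]
          by_cases h2 : q.val = m - 2
          · have : (q.val + 1) % m = m - 1 := by rw [Nat.mod_eq_of_lt (by omega)]; omega
            rw [this]
            constructor
            · intro _
              right
              exact (mem_congr (show q.val = (⟨m - 2, by omega⟩ : Fin m).val from h2)).mpr hc
            · intro _
              left
              rfl
          · -- q.val ≤ m-3
            have h3 : (q.val + 1) % m = q.val + 1 := Nat.mod_eq_of_lt (by omega)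
            rw [h3]
            constructor
            · rintro (h4 | ⟨r, hr, hv⟩)
              · omega
              · right
                have : r = q := Fin.val_injective (by omega)
                subst this
                exact Finset.mem_of_mem_erase hr
            · rintro (h4 | h4)
              · omega
              · right
                refine ⟨q, ?_, rfl⟩
                rw [hA, Finset.mem_erase]
                exact ⟨fun hcon => h2 (by rw [hcon]), h4⟩
      have hT1 : (stepP m n hm hn (insert (tf m hm) F, ∅) 0).2 = ∅ := by
        apply snd_step_emptyT
        rw [mem_stepS, Vstep_a]
        rw [mem_insert_tf_iff]
        push_neg
        constructor
        · show (0 + 1) % m ≠ m - 1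
          rw [Nat.mod_eq_of_lt (by omega)]
          omega
        · intro hcon
          have := hFb2 _ hcon
          have : (SCPaper.cyc m (zf m hm)).val = 1 := by
            rw [cyc_val]
            show (0 + 1) % m = 1
            rw [Nat.mod_eq_of_lt (by omega)]
          omega
      have hsnd : (stepP m n hm hn (stepP m n hm hn (insert (tf m hm) F, ∅) 0) 2).2 = ∅ := by
        rw [show stepP m n hm hn (stepP m n hm hn (insert (tf m hm) F, ∅) 0) 2
            = stepP m n hm hn (stepS m hm 0 (insert (tf m hm) F),
                (stepP m n hm hn (insert (tf m hm) F, ∅) 0).2) 2 from rfl]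
        rw [hT1]
        apply snd_step_emptyT
        rw [show stepS m hm 2 (stepS m hm 0 (insert (tf m hm) F))
            = (stepP m n hm hn (stepP m n hm hn (insert (tf m hm) F, ∅) 0) 2).1 from rfl, hfst]
        rw [mem_insert_tf_iff]
        push_neg
        constructor
        · show (0 : ℕ) ≠ m - 1
          omega
        · intro hcon
          have := hb _ hcon
          have : (zf m hm).val = 0 := rfl
          omega
      exact Prod.ext hfst hsnd
    -- case: m-2 ∉ E : use [0,1] (i.e. a then b)
    · have hAlt : ∀ r ∈ E, r.val + 1 < m := by
        intro r hr
        have h1 := hb r hr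
        have h3 : r.val ≠ m - 2 := fun h => hc ((mem_congr h).mp hr)
        omega
      set F := E.image (sup m hm) with hF
      have hFb : ∀ q ∈ F, 1 ≤ q.val ∧ q.val ≤ m - 2 := by
        intro q hq
        obtain ⟨r, hr, hv⟩ := (mem_sup_image m hm hAlt q).mp hq
        have h1 := hb r hr
        have h3 : r.val ≠ m - 2 := fun h => hc ((mem_congr h).mp hr)
        omega
      have hFb2 : ∀ q ∈ F, 2 ≤ q.val := by
        intro q hq
        obtain ⟨r, hr, hv⟩ := (mem_sup_image m hm hAlt q).mp hq
        have := hb r hr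
        omega
      have hμF : ∑ q ∈ F, (m - 1 - q.val) ≤ N := by
        have hinj : ∀ x ∈ E, ∀ y ∈ E, sup m hm x = sup m hm y → x = y := by
          intro x hx y hy he
          apply Fin.val_injective
          have e1 := sup_val m hm (hAlt x hx)
          have e2 := sup_val m hm (hAlt y hy)
          have e3 : (sup m hm x).val = (sup m hm y).val := by rw [he]
          omega
        rw [hF, Finset.sum_image hinj]
        obtain ⟨q0, hq0⟩ := hne
        have h4 : ∑ r ∈ E, (m - 1 - (sup m hm r).val) < ∑ r ∈ E, (m - 1 - r.val) := by
          apply Finset.sum_lt_sum_of_nonempty ⟨q0, hq0⟩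
          intro r hr
          rw [sup_val m hm (hAlt r hr)]
          have := hb r hr
          omega
        omega
      obtain ⟨w', hw'⟩ := ih F hμF hFb
      refine ⟨w' ++ [0, 1], ?_⟩
      rw [evalP_append, hw', evalP_pair]
      have hfst : (stepP m n hm hn (stepP m n hm hn (insert (tf m hm) F, ∅) 0) 1).1
          = insert (tf m hm) E := by
        ext q
        rw [show (stepP m n hm hn (stepP m n hm hn (insert (tf m hm) F, ∅) 0) 1).1
            = stepS m hm 1 (stepS m hm 0 (insert (tf m hm) F)) from rfl]
        rw [mem_stepS, Vstep_b, mem_stepS, Vstep_a]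
        rw [mem_insert_tf_iff, mem_insert_tf_iff]
        rw [mem_sup_image m hm hAlt]
        have hval : (SCPaper.cyc m (SCPaper.tpTop m q)).val = (tpv m q.val + 1) % m := by
          rw [cyc_val, tpTop_val]
        rw [hval]
        have hq := q.isLt
        by_cases h1 : q.val = m - 1
        · have : tpv m q.val = m - 2 := by unfold tpv; rw [if_pos h1]
          rw [this]
          have : (m - 2 + 1) % m = m - 1 := by
            rw [Nat.mod_eq_of_lt (by omega)]
            omega
          rw [this]
          simp [h1]
        · by_cases h2 : q.val = m - 2
          · have : tpv m q.val = m - 1 := by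
              unfold tpv
              rw [if_neg h1, if_pos h2]
            rw [this]
            have : (m - 1 + 1) % m = 0 := by
              have : m - 1 + 1 = m := by omega
              rw [this, Nat.mod_self]
            rw [this]
            constructor
            · rintro (h4 | ⟨r, hr, hv⟩)
              · omega
              · exfalso
                have := hAlt r hr
                have := hb r hr
                omega
            · rintro (h4 | h4)
              · omega
              · exact absurd ((mem_congr
                  (show ((⟨m - 2, by omega⟩ : Fin m)).val = q.val from h2.symm)).mpr h4) hc
          · have htp : tpv m q.val = q.val := by
              unfold tpv
              rw [if_neg h1, if_neg h2]
            rw [htp]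
            have h3 : (q.val + 1) % m = q.val + 1 := Nat.mod_eq_of_lt (by omega)
            rw [h3]
            constructor
            · rintro (h4 | ⟨r, hr, hv⟩)
              · omega
              · right
                have : r = q := Fin.val_injective (by omega)
                subst this
                exact hr
            · rintro (h4 | h4)
              · omega
              · exact Or.inr ⟨q, h4, rfl⟩
      have hT1 : (stepP m n hm hn (insert (tf m hm) F, ∅) 0).2 = ∅ := by
        apply snd_step_emptyT
        rw [mem_stepS, Vstep_a, mem_insert_tf_iff]
        push_neg
        constructor
        · show (0 + 1) % m ≠ m - 1
          rw [Nat.mod_eq_of_lt (by omega)]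
          omega
        · intro hcon
          have := hFb2 _ hcon
          have : (SCPaper.cyc m (zf m hm)).val = 1 := by
            rw [cyc_val]
            show (0 + 1) % m = 1
            rw [Nat.mod_eq_of_lt (by omega)]
          omega
      have hsnd : (stepP m n hm hn (stepP m n hm hn (insert (tf m hm) F, ∅) 0) 1).2 = ∅ := by
        rw [show stepP m n hm hn (stepP m n hm hn (insert (tf m hm) F, ∅) 0) 1
            = stepP m n hm hn (stepS m hm 0 (insert (tf m hm) F),
                (stepP m n hm hn (insert (tf m hm) F, ∅) 0).2) 1 from rfl]
        rw [hT1]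
        apply snd_step_emptyT
        rw [show stepS m hm 1 (stepS m hm 0 (insert (tf m hm) F))
            = (stepP m n hm hn (stepP m n hm hn (insert (tf m hm) F, ∅) 0) 1).1 from rfl, hfst]
        rw [mem_insert_tf_iff]
        push_neg
        constructor
        · show (0 : ℕ) ≠ m - 1
          omega
        · intro hcon
          have := hb _ hcon
          have : (zf m hm).val = 0 := rfl
          omega
      exact Prod.ext hfst hsnd

lemma tpTop_invol (k : ℕ) (hk : 3 ≤ k) (q : Fin k) :
    SCPaper.tpTop k (SCPaper.tpTop k q) = q := by
  apply Fin.val_injective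
  rw [tpTop_val, tpTop_val]
  have := q.isLt
  unfold tpv
  split_ifs <;> omega

lemma R_phase1 (S : Finset (Fin m)) (hne : S.Nonempty) (h0 : zf m hm ∉ S) :
    ∃ w, evalP m n hm hn (startP m n hm) w = (S, ∅) := by
  have hvS : ∀ q ∈ S, 1 ≤ q.val := by
    intro q hq
    rcases Nat.eq_zero_or_pos q.val with h | h
    · exact absurd ((mem_congr (show q.val = (zf m hm).val from h)).mp hq) h0
    · exact h
  by_cases htf : tf m hm ∈ S
  · -- m-1 ∈ S : direct from the stream
    set E := S.erase (tf m hm) with hE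
    have hb : ∀ q ∈ E, 1 ≤ q.val ∧ q.val ≤ m - 2 := by
      intro q hq
      have h1 := hvS q (Finset.mem_of_mem_erase hq)
      have h2 : q ≠ tf m hm := Finset.ne_of_mem_erase hq
      have h3 : q.val ≠ m - 1 := fun h => h2 (Fin.val_injective h)
      have := q.isLt
      omega
    obtain ⟨w, hw⟩ := R_stream m n hm hn _ E le_rfl hb
    rw [Finset.insert_erase htf] at hw
    exact ⟨w, hw⟩
  · by_cases hc : (⟨m - 2, by omega⟩ : Fin m) ∈ S
    · -- m-1 ∉ S, m-2 ∈ S : stream to the swapped set, then b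
      set E := S.erase ⟨m - 2, by omega⟩ with hE
      have hb : ∀ q ∈ E, 1 ≤ q.val ∧ q.val ≤ m - 2 := by
        intro q hq
        have h1 := hvS q (Finset.mem_of_mem_erase hq)
        have h3 : q.val ≠ m - 1 :=
          fun h => htf ((mem_congr h).mp (Finset.mem_of_mem_erase hq))
        have := q.isLt
        omega
      obtain ⟨w, hw⟩ := R_stream m n hm hn _ E le_rfl hb
      refine ⟨w ++ [1], ?_⟩
      rw [evalP_append, hw]
      show stepP m n hm hn (insert (tf m hm) E, ∅) 1 = (S, ∅)
      have hfst : stepS m hm 1 (insert (tf m hm) E) = S := by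
        ext q
        rw [mem_stepS, Vstep_b, mem_insert_tf_iff]
        have hq := q.isLt
        by_cases h1 : q.val = m - 1
        · have htp : (SCPaper.tpTop m q).val = m - 2 := by
            rw [tpTop_val]; unfold tpv; rw [if_pos h1]
          rw [htp]
          constructor
          · rintro (h4 | h4)
            · omega
            · exfalso
              have he : SCPaper.tpTop m q = ⟨m - 2, by omega⟩ := Fin.val_injective htp
              rw [he, hE] at h4
              exact (Finset.notMem_erase _ _) h4
          · intro h4
            exfalso
            have he : q = tf m hm := Fin.val_injective h1
            rw [he] at h4
            exact htf h4
        · by_cases h2 : q.val = m - 2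
          · have htp : (SCPaper.tpTop m q).val = m - 1 := by
              rw [tpTop_val]; unfold tpv; rw [if_neg h1, if_pos h2]
            rw [htp]
            constructor
            · intro _
              exact (mem_congr (show q.val = (⟨m - 2, by omega⟩ : Fin m).val from h2)).mpr hc
            · intro _
              exact Or.inl rfl
          · have htp : (SCPaper.tpTop m q).val = q.val := by
              rw [tpTop_val]; unfold tpv; rw [if_neg h1, if_neg h2]
            have htpq : SCPaper.tpTop m q = q := Fin.val_injective htp
            rw [htpq]
            constructor
            · rintro (h4 | h4)
              · omega
              · exact Finset.mem_of_mem_erase h4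
            · intro h4
              refine Or.inr ?_
              rw [hE, Finset.mem_erase]
              exact ⟨fun hcon => h2 (by rw [hcon]), h4⟩
      have hsnd : (stepP m n hm hn (insert (tf m hm) E, ∅) 1).2 = ∅ := by
        apply snd_step_emptyT
        rw [show stepS m hm 1 (insert (tf m hm) E) = S from hfst]
        exact h0
      exact Prod.ext (by exact hfst) hsnd
    · -- m-1 ∉ S, m-2 ∉ S : stream to S plus top, then c
      have hb : ∀ q ∈ S, 1 ≤ q.val ∧ q.val ≤ m - 2 := by
        intro q hq
        have h1 := hvS q hq
        have h3 : q.val ≠ m - 1 := fun h => htf ((mem_congr h).mp hq)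
        have := q.isLt
        omega
      obtain ⟨w, hw⟩ := R_stream m n hm hn _ S le_rfl hb
      refine ⟨w ++ [2], ?_⟩
      rw [evalP_append, hw]
      show stepP m n hm hn (insert (tf m hm) S, ∅) 2 = (S, ∅)
      have hfst : stepS m hm 2 (insert (tf m hm) S) = S := by
        ext q
        rw [mem_stepS, Vstep_c, mem_insert_tf_iff]
        have hq := q.isLt
        by_cases h1 : q.val = m - 1
        · have hsg : (SCPaper.singTop m q).val = m - 2 := by
            rw [singTop_val]; unfold sgv; rw [if_pos h1]
          rw [hsg]
          constructor
          · rintro (h4 | h4)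
            · omega
            · exfalso
              have he : SCPaper.singTop m q = ⟨m - 2, by omega⟩ := Fin.val_injective hsg
              rw [he] at h4
              exact hc h4
          · intro h4
            exfalso
            have he : q = tf m hm := Fin.val_injective h1
            rw [he] at h4
            exact htf h4
        · have hsg : (SCPaper.singTop m q).val = q.val := by
            rw [singTop_val]; unfold sgv; rw [if_neg h1]
          have hsgq : SCPaper.singTop m q = q := Fin.val_injective hsg
          rw [hsgq]
          constructor
          · rintro (h4 | h4)
            · omega
            · exact h4
          · exact fun h4 => Or.inr h4
      have hsnd : (stepP m n hm hn (insert (tf m hm) S, ∅) 2).2 = ∅ := by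
        apply snd_step_emptyT
        rw [show stepS m hm 2 (insert (tf m hm) S) = S from hfst]
        exact h0
      exact Prod.ext (by exact hfst) hsnd

lemma stepS_d (A : Finset (Fin m)) : stepS m hm 3 A = A := by
  ext q
  rw [mem_stepS, Vstep_d]

lemma R_buildT (S : Finset (Fin m)) (hne : S.Nonempty) (h0 : zf m hm ∉ S) (T : Finset (Fin n)) :
    ∃ w, evalP m n hm hn (startP m n hm) w = (S, T) := by
  suffices h : ∀ (N : ℕ) (T : Finset (Fin n)), (∑ q ∈ T, q.val) + T.card ≤ N →
      ∃ w, evalP m n hm hn (startP m n hm) w = (S, T) from h _ T le_rfl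
  intro N
  induction N with
  | zero =>
    intro T hT
    have hT0 : T.card = 0 := by omega
    rw [Finset.card_eq_zero.mp hT0]
    exact R_phase1 m n hm hn S hne h0
  | succ N ih =>
    intro T hT
    rcases Finset.eq_empty_or_nonempty T with rfl | hTne
    · exact R_phase1 m n hm hn S hne h0
    by_cases h0T : zf n hn ∈ T
    · set T' := T.erase (zf n hn) with hT'
      have hμ : (∑ q ∈ T', q.val) + T'.card ≤ N := by
        have hsum : (∑ q ∈ T', q.val) + (zf n hn).val = ∑ q ∈ T, q.val :=
          Finset.sum_erase_add T _ h0T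
        have hcard : T'.card + 1 = T.card := Finset.card_erase_add_one h0T
        have hz : (zf n hn).val = 0 := rfl
        omega
      obtain ⟨w, hw⟩ := ih T' hμ
      refine ⟨w ++ List.replicate m 0, ?_⟩
      rw [evalP_append, hw, R_inj m n hm hn (S, T') hne]
      have : T' ∪ {zf n hn} = T := by
        ext q
        rw [Finset.mem_union, Finset.mem_singleton, hT', Finset.mem_erase]
        constructor
        · rintro (⟨_, h4⟩ | rfl)
          · exact h4
          · exact h0T
        · intro h4
          by_cases hq : q = zf n hn
          · exact Or.inr hq
          · exact Or.inl ⟨hq, h4⟩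
      rw [this]
    · have hpos : ∀ q ∈ T, 1 ≤ q.val := by
        intro q hq
        rcases Nat.eq_zero_or_pos q.val with h | h
        · exact absurd ((mem_congr (show q.val = (zf n hn).val from h)).mp hq) h0T
        · exact h
      set pf : Fin n → Fin n := fun q => ⟨q.val - 1, by have := q.isLt; omega⟩ with hpf
      set T' := T.image pf with hT'
      have hinj : ∀ x ∈ T, ∀ y ∈ T, pf x = pf y → x = y := by
        intro x hx y hy he
        have e3 : (pf x).val = (pf y).val := by rw [he]
        have := hpos x hx
        have := hpos y hy
        exact Fin.val_injective (by simp only [hpf] at e3; omega)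
      have hμ : (∑ q ∈ T', q.val) + T'.card ≤ N := by
        rw [hT', Finset.sum_image hinj, Finset.card_image_of_injOn hinj]
        have hsum : ∑ q ∈ T, (pf q).val + T.card ≤ ∑ q ∈ T, q.val := by
          have h1 : ∀ q ∈ T, (pf q).val + 1 ≤ q.val := by
            intro q hq
            have := hpos q hq
            simp only [hpf]
            omega
          calc ∑ q ∈ T, (pf q).val + T.card = ∑ q ∈ T, ((pf q).val + 1) := by
                rw [Finset.sum_add_distrib, Finset.sum_const, smul_eq_mul, mul_one]
            _ ≤ ∑ q ∈ T, q.val := Finset.sum_le_sum h1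
        have hTc : 1 ≤ T.card := Finset.card_pos.mpr hTne
        omega
      obtain ⟨w, hw⟩ := ih T' hμ
      refine ⟨w ++ [3], ?_⟩
      rw [evalP_append, hw]
      show stepP m n hm hn (S, T') 3 = (S, T)
      have hfst : (stepP m n hm hn (S, T') 3).1 = S := stepS_d m hm S
      have hcond : zf m hm ∉ stepS m hm 3 S := by rw [stepS_d]; exact h0
      have hsnd : (stepP m n hm hn (S, T') 3).2 = T := by
        unfold stepP
        rw [if_neg hcond, Finset.union_empty, hT', Finset.image_image]
        have himg : ∀ q ∈ T, (Nstep n hn 3 ∘ pf) q = q := by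
          intro q hq
          have h1 := hpos q hq
          apply Fin.val_injective
          show (SCPaper.cyc n (pf q)).val = q.val
          rw [cyc_val]
          simp only [hpf]
          show (q.val - 1 + 1) % n = q.val
          rw [Nat.mod_eq_of_lt (by have := q.isLt; omega)]
          omega
        rw [Finset.image_congr (fun q hq => himg q hq), Finset.image_id']
      exact Prod.ext hfst hsnd

lemma R3 (S : Finset (Fin m)) (h0 : zf m hm ∈ S) (hu : S ≠ univ)
    (T : Finset (Fin n)) (h0T : zf n hn ∈ T) :
    ∃ w, evalP m n hm hn (startP m n hm) w = (S, T) := by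
  have hg : ∃ g, g ∉ S := by
    by_contra hcon
    push_neg at hcon
    exact hu (Finset.eq_univ_iff_forall.mpr hcon)
  obtain ⟨g, hg⟩ := hg
  have hgz : 1 ≤ g.val := by
    rcases Nat.eq_zero_or_pos g.val with h | h
    · exact absurd ((mem_congr (show g.val = (zf m hm).val from h)).mpr h0) hg
    · exact h
  have hglt := g.isLt
  set ρ := m - g.val with hρ
  set sh : Fin m → Fin m := fun q => ⟨(q.val + ρ) % m, Nat.mod_lt _ (pos3 hm)⟩ with hsh
  set S' := S.image sh with hS'
  have hS'ne : S'.Nonempty := ⟨sh (zf m hm), Finset.mem_image_of_mem _ h0⟩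
  have hmodval : ∀ q : Fin m, (q.val + ρ) % m = if q.val < g.val then q.val + ρ else q.val - g.val := by
    intro q
    have hq := q.isLt
    split_ifs with h
    · exact Nat.mod_eq_of_lt (by omega)
    · have : q.val + ρ = m + (q.val - g.val) := by omega
      rw [this, Nat.add_mod_left, Nat.mod_eq_of_lt (by omega)]
  have hS'0 : zf m hm ∉ S' := by
    intro hcon
    obtain ⟨q, hq, he⟩ := Finset.mem_image.mp hcon
    have : (q.val + ρ) % m = 0 := by rw [show ((q.val + ρ) % m) = (sh q).val from rfl, he]; rfl
    rw [hmodval q] at this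
    have hqg : q.val = g.val := by
      split_ifs at this <;> omega
    exact hg ((mem_congr hqg).mp hq)
  obtain ⟨w, hw⟩ := R_buildT m n hm hn S' hS'ne hS'0 T
  refine ⟨w ++ List.replicate ρ 0, ?_⟩
  rw [evalP_append, hw]
  have hfst : (evalP m n hm hn (S', T) (List.replicate ρ 0)).1 = S := by
    rw [L_apow_S]
    ext q
    simp only [Finset.mem_filter, Finset.mem_univ, true_and]
    constructor
    · intro hmem
      obtain ⟨r, hr, he⟩ := Finset.mem_image.mp hmem
      have he2 : (r.val + ρ) % m = (q.val + ρ) % m := by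
        rw [show ((r.val + ρ) % m) = (sh r).val from rfl, he]
      rw [hmodval r, hmodval q] at he2
      have := r.isLt
      have := q.isLt
      have : r.val = q.val := by split_ifs at he2 <;> omega
      exact (mem_congr this).mp hr
    · intro hmem
      exact Finset.mem_image.mpr ⟨q, hmem, Fin.val_injective rfl⟩
  have hsnd : (evalP m n hm hn (S', T) (List.replicate ρ 0)).2 = T := by
    apply Finset.Subset.antisymm
    · refine Finset.Subset.trans (L_apow_T_sub m n hm hn (S', T) ρ).2 ?_
      show T ∪ {zf n hn} ⊆ T
      rw [Finset.union_subset_iff]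
      exact ⟨Finset.Subset.refl _, Finset.singleton_subset_iff.mpr h0T⟩
    · exact (L_apow_T_sub m n hm hn (S', T) ρ).1
  exact Prod.ext hfst hsnd

lemma R4 (T : Finset (Fin n)) (h0T : zf n hn ∈ T) :
    ∃ w, evalP m n hm hn (startP m n hm) w = (univ, T) := by
  have htpz : SCPaper.tpTop n (zf n hn) = zf n hn := by
    apply Fin.val_injective
    rw [tpTop_val]
    show tpv n 0 = 0
    unfold tpv
    have : (0:ℕ) ≠ n - 1 := by omega
    have : (0:ℕ) ≠ n - 2 := by omega
    split_ifs <;> omega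
  set S'' := (univ : Finset (Fin m)).erase (tf m hm) with hS''
  have h0'' : zf m hm ∈ S'' := by
    rw [hS'', Finset.mem_erase]
    refine ⟨?_, Finset.mem_univ _⟩
    intro hcon
    have : (zf m hm).val = (tf m hm).val := by rw [hcon]
    have h1 : (zf m hm).val = 0 := rfl
    have h2 : (tf m hm).val = m - 1 := rfl
    omega
  have hu'' : S'' ≠ univ := by
    intro hcon
    have : tf m hm ∈ S'' := by rw [hcon]; exact Finset.mem_univ _
    exact (Finset.notMem_erase _ _) (hS'' ▸ this)
  set T₀ := T.image (Nstep n hn 2) with hT₀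
  have h0T₀ : zf n hn ∈ T₀ := by
    rw [hT₀]
    apply Finset.mem_image.mpr
    exact ⟨zf n hn, h0T, htpz⟩
  obtain ⟨w, hw⟩ := R3 m n hm hn S'' h0'' hu'' T₀ h0T₀
  refine ⟨w ++ [2], ?_⟩
  rw [evalP_append, hw]
  show stepP m n hm hn (S'', T₀) 2 = (univ, T)
  have hfst : stepS m hm 2 S'' = univ := by
    apply Finset.eq_univ_iff_forall.mpr
    intro q
    rw [mem_stepS, Vstep_c, hS'', Finset.mem_erase]
    refine ⟨?_, Finset.mem_univ _⟩
    intro hcon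
    have h1 : (SCPaper.singTop m q).val = (tf m hm).val := by rw [hcon]
    rw [singTop_val] at h1
    have h2 : (tf m hm).val = m - 1 := rfl
    have := q.isLt
    unfold sgv at h1
    split_ifs at h1 <;> omega
  have hsnd : (stepP m n hm hn (S'', T₀) 2).2 = T := by
    unfold stepP
    rw [if_pos (by rw [show stepS m hm 2 (S'', T₀).1 = univ from hfst]; exact Finset.mem_univ _)]
    show T₀.image (Nstep n hn 2) ∪ {zf n hn} = T
    rw [hT₀, Finset.image_image]
    have himg : ∀ q ∈ T, (Nstep n hn 2 ∘ Nstep n hn 2) q = q := by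
      intro q _
      show SCPaper.tpTop n (SCPaper.tpTop n q) = q
      exact tpTop_invol n hn q
    rw [Finset.image_congr (fun q hq => himg q hq), Finset.image_id']
    rw [Finset.union_eq_left.mpr (Finset.singleton_subset_iff.mpr h0T)]
  exact Prod.ext (by exact hfst) hsnd

lemma R_all (p : PS m n) (h : Inv m n hm hn p) :
    ∃ w, evalP m n hm hn (startP m n hm) w = p := by
  obtain ⟨S, T⟩ := p
  rcases Finset.eq_empty_or_nonempty S with rfl | hne
  · -- S = ∅
    have hz : zf m hm ∉ ({tf m hm} : Finset (Fin m)) := by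
      rw [Finset.mem_singleton]
      intro hcon
      have : (zf m hm).val = (tf m hm).val := by rw [hcon]
      have h1 : (zf m hm).val = 0 := rfl
      have h2 : (tf m hm).val = m - 1 := rfl
      omega
    obtain ⟨w, hw⟩ := R_buildT m n hm hn {tf m hm} ⟨tf m hm, Finset.mem_singleton_self _⟩ hz
      (T.image (Nstep n hn 2))
    refine ⟨w ++ [2], ?_⟩
    rw [evalP_append, hw]
    show stepP m n hm hn ({tf m hm}, T.image (Nstep n hn 2)) 2 = (∅, T)
    have hfst : stepS m hm 2 ({tf m hm} : Finset (Fin m)) = ∅ := by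
      apply Finset.eq_empty_iff_forall_notMem.mpr
      intro q hq
      rw [mem_stepS, Vstep_c, Finset.mem_singleton] at hq
      have h1 : (SCPaper.singTop m q).val = (tf m hm).val := by rw [hq]
      rw [singTop_val] at h1
      have h2 : (tf m hm).val = m - 1 := rfl
      have := q.isLt
      unfold sgv at h1
      split_ifs at h1 <;> omega
    have hcond : zf m hm ∉ stepS m hm 2 ({tf m hm} : Finset (Fin m)) := by
      rw [hfst]
      exact Finset.notMem_empty _
    have hsnd : (stepP m n hm hn ({tf m hm}, T.image (Nstep n hn 2)) 2).2 = T := by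
      unfold stepP
      rw [if_neg hcond, Finset.union_empty, Finset.image_image]
      have himg : ∀ q ∈ T, (Nstep n hn 2 ∘ Nstep n hn 2) q = q := by
        intro q _
        exact tpTop_invol n hn q
      rw [Finset.image_congr (fun q hq => himg q hq), Finset.image_id']
    exact Prod.ext (by exact hfst) hsnd
  · by_cases h0 : zf m hm ∈ S
    · have h0T : zf n hn ∈ T := h h0
      by_cases hu : S = univ
      · subst hu
        exact R4 m n hm hn T h0T
      · exact R3 m n hm hn S h0 hu T h0T
    · exact R_buildT m n hm hn S hne h0 T

/-! ### distinguishability -/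

lemma stepS_b_zf (A : Finset (Fin m)) : zf m hm ∈ stepS m hm 1 A ↔ zf m hm ∈ A := by
  rw [mem_stepS, Vstep_b]
  have h : SCPaper.tpTop m (zf m hm) = zf m hm := by
    apply Fin.val_injective
    rw [tpTop_val]
    show tpv m 0 = 0
    unfold tpv
    split_ifs <;> omega
  rw [h]

lemma zf13_pres (z : List (Fin 4)) (hz : ∀ x ∈ z, x = 1 ∨ x = 3) (p : PS m n) :
    (zf m hm ∈ (evalP m n hm hn p z).1 ↔ zf m hm ∈ p.1) := by
  induction z generalizing p with
  | nil => rfl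
  | cons x z' ih =>
    rw [evalP_cons,
      ih (fun y hy => hz y (List.mem_cons_of_mem _ hy)) (stepP m n hm hn p x)]
    show zf m hm ∈ stepS m hm x p.1 ↔ zf m hm ∈ p.1
    rcases hz x List.mem_cons_self with rfl | rfl
    · exact stepS_b_zf m hm p.1
    · rw [stepS_d]

def t1 (q : Fin n) : Fin n := Nstep n hn 1 (Nstep n hn 3 q)

lemma t1_val (q : Fin n) :
    (t1 n hn q).val = if q.val = n - 1 then 0 else min (q.val + 1) (n - 2) := by
  show (SCPaper.singTop n (SCPaper.cyc n q)).val = _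
  rw [singTop_val, cyc_val]
  have hq := q.isLt
  by_cases h : q.val = n - 1
  · rw [if_pos h]
    have h1 : (q.val + 1) % n = 0 := by
      rw [show q.val + 1 = n by omega, Nat.mod_self]
    rw [h1]
    unfold sgv
    rw [if_neg (by omega)]
  · rw [if_neg h]
    have h1 : (q.val + 1) % n = q.val + 1 := Nat.mod_eq_of_lt (by omega)
    rw [h1]
    unfold sgv
    split_ifs <;> omega

lemma t1_iter (j : ℕ) : ∀ q : Fin n, q.val ≠ n - 1 →
    ((t1 n hn)^[j] q).val = min (q.val + j) (n - 2) := by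
  induction j with
  | zero =>
    intro q hq
    have := q.isLt
    simp only [Function.iterate_zero, id_eq]
    omega
  | succ j ih =>
    intro q hq
    rw [Function.iterate_succ_apply]
    have h1 : (t1 n hn q).val = min (q.val + 1) (n - 2) := by
      rw [t1_val, if_neg hq]
    have h2 : (t1 n hn q).val ≠ n - 1 := by omega
    rw [ih _ h2, h1]
    omega

lemma t1_iter_all (q : Fin n) : ((t1 n hn)^[2 * n] q).val = n - 2 := by
  have hq := q.isLt
  by_cases h : q.val = n - 1
  · have hsplit : 2 * n = (2 * n - 1) + 1 := by omega
    rw [hsplit, Function.iterate_add_apply]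
    have h1 : ((t1 n hn)^[1] q).val = 0 := by
      simp only [Function.iterate_one]
      rw [t1_val, if_pos h]
    have h2 : ((t1 n hn)^[1] q).val ≠ n - 1 := by omega
    rw [t1_iter n hn _ _ h2, h1]
    omega
  · rw [t1_iter n hn _ _ h]
    omega

def nword (z : List (Fin 4)) (q : Fin n) : Fin n :=
  z.foldl (fun r x => Nstep n hn x r) q

lemma nword_append (z1 z2 : List (Fin 4)) (q : Fin n) :
    nword n hn (z1 ++ z2) q = nword n hn z2 (nword n hn z1 q) :=
  List.foldl_append ..

lemma pure_evolution (z : List (Fin 4)) (hz : ∀ x ∈ z, x = 1 ∨ x = 3) :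
    ∀ (p : PS m n), zf m hm ∉ p.1 →
    (evalP m n hm hn p z).2 = p.2.image (nword n hn z) := by
  induction z with
  | nil =>
    intro p h0
    rw [evalP_nil]
    rw [show nword n hn [] = id from rfl, Finset.image_id]
  | cons x z' ih =>
    intro p h0
    rw [evalP_cons]
    have hx := hz x List.mem_cons_self
    have h0' : zf m hm ∉ stepS m hm x p.1 := by
      rcases hx with rfl | rfl
      · rw [stepS_b_zf]; exact h0
      · rw [stepS_d]; exact h0
    have hstep : (stepP m n hm hn p x).2 = p.2.image (Nstep n hn x) := by
      unfold stepP
      rw [if_neg h0', Finset.union_empty]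
    have ih' := ih (fun y hy => hz y (List.mem_cons_of_mem _ hy))
      (stepP m n hm hn p x) h0'
    rw [ih', hstep, Finset.image_image]
    rfl

lemma nword_block (k : ℕ) (q : Fin n) :
    nword n hn ((List.replicate k ([3, 1] : List (Fin 4))).flatten) q = (t1 n hn)^[k] q := by
  induction k generalizing q with
  | zero => rfl
  | succ k ih =>
    rw [List.replicate_succ, List.flatten_cons]
    rw [nword_append]
    rw [show nword n hn [3, 1] q = t1 n hn q from rfl]
    rw [ih]
    rw [← Function.iterate_succ_apply]

lemma distS (p p' : PS m n) (r : Fin m) (hr : r ∈ p.1) (hr' : r ∉ p'.1) :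
    ∃ z, tf n hn ∈ (evalP m n hm hn p z).2 ∧ tf n hn ∉ (evalP m n hm hn p' z).2 := by
  set blk0 := (List.replicate (2 * n) ([3, 1] : List (Fin 4))).flatten with hblk0
  set blk := blk0 ++ [1] with hblk
  have hblk_letters : ∀ x ∈ blk, x = 1 ∨ x = 3 := by
    intro x hx
    rw [hblk, List.mem_append] at hx
    rcases hx with hx | hx
    · rw [hblk0] at hx
      obtain ⟨l, hl, hxl⟩ := List.mem_flatten.mp hx
      have := (List.mem_replicate.mp hl).2
      subst this
      rcases List.mem_cons.mp hxl with rfl | h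
      · exact Or.inr rfl
      · rw [List.mem_singleton] at h
        exact Or.inl h
    · rw [List.mem_singleton] at hx
      exact Or.inl hx
  refine ⟨List.replicate r.val 0 ++ (blk ++ List.replicate (n - 1) 3), ?_, ?_⟩
  · -- side 1 : accepts
    rw [evalP_append, evalP_append]
    set q1 := evalP m n hm hn p (List.replicate r.val 0) with hq1
    have h1 : zf m hm ∈ q1.1 := by
      rw [hq1, L_apow_S]
      simp only [Finset.mem_filter, Finset.mem_univ, true_and]
      have hv : ((zf m hm).val + r.val) % m = r.val := by
        show (0 + r.val) % m = r.val
        rw [Nat.zero_add, Nat.mod_eq_of_lt r.isLt]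
      exact (mem_congr hv).mpr hr
    set q2 := evalP m n hm hn q1 blk with hq2
    have h2a : zf m hm ∈ q2.1 := by
      rw [hq2, zf13_pres m n hm hn blk hblk_letters]
      exact h1
    have h2b : zf n hn ∈ q2.2 := by
      rw [hq2, hblk, evalP_append]
      rw [show evalP m n hm hn (evalP m n hm hn q1 blk0) [1]
          = stepP m n hm hn (evalP m n hm hn q1 blk0) 1 from rfl]
      apply zf_mem_step_snd
      rw [stepS_b_zf]
      rw [zf13_pres m n hm hn blk0 (fun x hx => hblk_letters x (by
        rw [hblk, List.mem_append]; exact Or.inl hx))]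
      exact h1
    have hchar := (L_dpow m n hm hn q2 (n - 1) (by omega)).2 (tf n hn)
    rw [hchar]
    left
    refine ⟨zf n hn, h2b, ?_⟩
    show (0 + (n - 1)) % n = (tf n hn).val
    rw [Nat.zero_add, Nat.mod_eq_of_lt (by omega)]
    rfl
  · -- side 2 : rejects
    rw [evalP_append, evalP_append]
    set q1 := evalP m n hm hn p' (List.replicate r.val 0) with hq1
    have h1 : zf m hm ∉ q1.1 := by
      rw [hq1, L_apow_S]
      simp only [Finset.mem_filter, Finset.mem_univ, true_and]
      intro hcon
      have hv : ((zf m hm).val + r.val) % m = r.val := by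
        show (0 + r.val) % m = r.val
        rw [Nat.zero_add, Nat.mod_eq_of_lt r.isLt]
      exact hr' ((mem_congr hv).mp hcon)
    set q2 := evalP m n hm hn q1 blk with hq2
    have h2a : zf m hm ∉ q2.1 := by
      rw [hq2, zf13_pres m n hm hn blk hblk_letters]
      exact h1
    have h2snd : q2.2 = q1.2.image (nword n hn blk) := by
      rw [hq2]
      exact pure_evolution m n hm hn blk hblk_letters q1 h1
    have hval_blk : ∀ t : Fin n, (nword n hn blk t).val = n - 2 := by
      intro t
      rw [hblk, nword_append, nword_block]
      show (SCPaper.singTop n ((t1 n hn)^[2 * n] t)).val = n - 2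
      rw [singTop_val, t1_iter_all]
      unfold sgv
      rw [if_neg (by omega)]
    have hchar := (L_dpow m n hm hn q2 (n - 1) (by omega)).2 (tf n hn)
    rw [hchar]
    push_neg
    constructor
    · intro t ht
      rw [h2snd] at ht
      obtain ⟨t0, _, rfl⟩ := Finset.mem_image.mp ht
      intro hcon
      rw [hval_blk t0] at hcon
      have : (n - 2 + (n - 1)) = n + (n - 3) := by omega
      rw [this, Nat.add_mod_left, Nat.mod_eq_of_lt (by omega)] at hcon
      have : (tf n hn).val = n - 1 := rfl
      omega
    · intro hcon
      exact absurd hcon h2a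

lemma distT (p p' : PS m n) (hS : p.1 = p'.1) (r : Fin n) (hr : r ∈ p.2) (hr' : r ∉ p'.2) :
    ∃ z, tf n hn ∈ (evalP m n hm hn p z).2 ∧ tf n hn ∉ (evalP m n hm hn p' z).2 := by
  set k := n - 1 - r.val with hk
  refine ⟨List.replicate k 3, ?_, ?_⟩
  · rw [(L_dpow m n hm hn p k (by omega)).2]
    left
    refine ⟨r, hr, ?_⟩
    show (r.val + k) % n = (tf n hn).val
    have := r.isLt
    rw [show r.val + k = n - 1 by omega, Nat.mod_eq_of_lt (by omega)]
    rfl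
  · rw [(L_dpow m n hm hn p' k (by omega)).2]
    push_neg
    constructor
    · intro t ht hcon
      have htlt := t.isLt
      have hrlt := r.isLt
      have htf : (tf n hn).val = n - 1 := rfl
      rw [htf] at hcon
      rcases Nat.lt_or_ge (t.val + k) n with hlt | hge
      · rw [Nat.mod_eq_of_lt hlt] at hcon
        have : t.val = r.val := by omega
        exact hr' ((mem_congr this).mp ht)
      · have h2 : t.val + k = n + (t.val + k - n) := by omega
        rw [h2, Nat.add_mod_left, Nat.mod_eq_of_lt (by omega)] at hcon
        omega
    · intro hcon
      have : (tf n hn).val = n - 1 := rfl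
      omega

lemma dist (p p' : PS m n) (hne : p ≠ p') :
    ∃ z, ¬ (tf n hn ∈ (evalP m n hm hn p z).2 ↔ tf n hn ∈ (evalP m n hm hn p' z).2) := by
  by_cases hS : p.1 = p'.1
  · have hT : p.2 ≠ p'.2 := by
      intro h
      exact hne (Prod.ext hS h)
    have hx : ∃ r, ¬ (r ∈ p.2 ↔ r ∈ p'.2) := by
      by_contra hcon
      push_neg at hcon
      exact hT (Finset.ext fun r => hcon r)
    obtain ⟨r, hrx⟩ := hx
    by_cases hrp : r ∈ p.2
    · have hrp' : r ∉ p'.2 := fun h => hrx ⟨fun _ => h, fun _ => hrp⟩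
      obtain ⟨z, h1, h2⟩ := distT m n hm hn p p' hS r hrp hrp'
      exact ⟨z, fun hiff => h2 (hiff.mp h1)⟩
    · have hrp' : r ∈ p'.2 := by
        by_contra h
        exact hrx ⟨fun hh => absurd hh hrp, fun hh => absurd hh h⟩
      obtain ⟨z, h1, h2⟩ := distT m n hm hn p' p hS.symm r hrp' hrp
      exact ⟨z, fun hiff => h2 (hiff.mpr h1)⟩
  · have hx : ∃ r, ¬ (r ∈ p.1 ↔ r ∈ p'.1) := by
      by_contra hcon
      push_neg at hcon
      exact hS (Finset.ext fun r => hcon r)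
    obtain ⟨r, hrx⟩ := hx
    by_cases hrp : r ∈ p.1
    · have hrp' : r ∉ p'.1 := fun h => hrx ⟨fun _ => h, fun _ => hrp⟩
      obtain ⟨z, h1, h2⟩ := distS m n hm hn p p' r hrp hrp'
      exact ⟨z, fun hiff => h2 (hiff.mp h1)⟩
    · have hrp' : r ∈ p'.1 := by
        by_contra h
        exact hrx ⟨fun hh => absurd hh hrp, fun hh => absurd hh h⟩
      obtain ⟨z, h1, h2⟩ := distS m n hm hn p' p r hrp' hrp
      exact ⟨z, fun hiff => h2 (hiff.mpr h1)⟩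

/-! ### assembling the bounds -/

lemma lower (k : ℕ) (M : DFA (Fin 4) (Fin k))
    (hM : M.accepts = SCPaper.rev (SCPaper.V m (pos3 hm)) * SCPaper.Vdcba n (pos3 hn)) :
    3 * 2 ^ (m + n - 2) ≤ k := by
  classical
  have reach := fun s : Sig m n hm hn => R_all m n hm hn s.val s.property
  choose ws hws using reach
  set F : Sig m n hm hn → Fin k := fun s => M.eval (ws s) with hF
  have hinj : Function.Injective F := by
    intro s t hst
    by_contra hne0
    have hvalne : s.val ≠ t.val := fun h => hne0 (Subtype.ext h)
    obtain ⟨z, hz⟩ := dist m n hm hn s.val t.val hvalne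
    apply hz
    have h1 : ∀ u : Sig m n hm hn,
        (ws u ++ z ∈ M.accepts ↔ tf n hn ∈ (evalP m n hm hn u.val z).2) := by
      intro u
      rw [hM, memL m n hm hn, evalP_append, hws u]
    have h2 : (ws s ++ z ∈ M.accepts) ↔ (ws t ++ z ∈ M.accepts) := by
      rw [DFA.mem_accepts, DFA.mem_accepts]
      have e1 : M.eval (ws s ++ z) = M.evalFrom (F s) z := M.evalFrom_of_append _ _ _
      have e2 : M.eval (ws t ++ z) = M.evalFrom (F t) z := M.evalFrom_of_append _ _ _
      rw [e1, e2, hst]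
    rw [← h1 s, ← h1 t]
    exact h2
  have hcard := Fintype.card_le_of_injective F hinj
  rw [card_Sig m n hm hn, Fintype.card_fin] at hcard
  exact hcard

end Main
end KRL

theorem reversed_product_KRL_tight (m n : ℕ) (hm : 3 ≤ m) (hn : 3 ≤ n) :
    sc (rev (V m (by omega)) * Vdcba n (by omega)) = 3 * 2 ^ (m + n - 2) := by
  have e : KRL.Sig m n hm hn ≃ Fin (3 * 2 ^ (m + n - 2)) :=
    Fintype.equivFinOfCardEq (KRL.card_Sig m n hm hn)
  have hmem : (3 * 2 ^ (m + n - 2)) ∈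
      complexitySet (rev (V m (by omega)) * Vdcba n (by omega)) := by
    refine ⟨DFA.reindex e (KRL.D m n hm hn), ?_⟩
    rw [DFA.accepts_reindex]
    exact KRL.acceptsD m n hm hn
  apply le_antisymm
  · exact Nat.sInf_le hmem
  · apply le_csInf ⟨_, hmem⟩
    intro k hk
    obtain ⟨M, hMacc⟩ := hk
    exact KRL.lower m n hm hn k M hMacc
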